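/- Let G be a compact Hausdorff topological group. Then for every closed subgroup P of Aut(G) (with the compact-open topology), the topological semidirect product G ⋊ P is a minimal topological group. -/

import Mathlib

open scoped Topology

/-- The group of self-homeomorphisms of `X`, with composition as multiplication:
`(f * g) x = f (g x)`, identity `Homeomorph.refl` and inverse `Homeomorph.symm`. -/
instance homeoGroup (X : Type*) [TopologicalSpace X] : Group (X ≃ₜ X) where
  mul f g := g.trans f
  one := Homeomorph.refl X
  inv := Homeomorph.symm
  mul_assoc f g h := rfl
  one_mul f := rfl
  mul_one f := rfl
  inv_mul_cancel f := by ext x; exact f.symm_apply_apply x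

/-- The compact-open topology on the homeomorphism group `H(X)`, induced from the
compact-open topology on `C(X, X)`. -/
def coTop (X : Type*) [TopologicalSpace X] : TopologicalSpace (X ≃ₜ X) :=
  TopologicalSpace.induced (fun f : X ≃ₜ X => (f : C(X, X))) ContinuousMap.compactOpen

/-- The group `Aut(G)` of all topological group automorphisms of a topological group `G`
(group automorphisms that are homeomorphisms), as a subgroup of the homeomorphism
group of `G`. -/
def topAut (G : Type*) [Group G] [TopologicalSpace G] : Subgroup (G ≃ₜ G) where
  carrier := {f : G ≃ₜ G | ∀ a b : G, f (a * b) = f a * f b}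
  one_mem' := fun _ _ => rfl
  mul_mem' := by
    intro f g hf hg a b
    show f (g (a * b)) = f (g a) * f (g b)
    rw [hg, hf]
  inv_mem' := by
    intro f hf a b
    show f.symm (a * b) = f.symm a * f.symm b
    apply f.injective
    rw [hf]
    simp

/-- The compact-open topology on `Aut(G)`. -/
def autTop (G : Type*) [Group G] [TopologicalSpace G] : TopologicalSpace ↥(topAut G) :=
  TopologicalSpace.induced (Subtype.val : ↥(topAut G) → G ≃ₜ G) (coTop G)

/-- The tautological action of a subgroup `P ≤ Aut(G)` on `G`, as a homomorphism
`P →* MulAut G`. -/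
def actHom {G : Type*} [Group G] [TopologicalSpace G] (P : Subgroup ↥(topAut G)) :
    ↥P →* MulAut G where
  toFun p := MulEquiv.mk' p.1.1.toEquiv (fun a b => p.1.2 a b)
  map_one' := rfl
  map_mul' _ _ := rfl

/-- The topology on a subgroup `P ≤ Aut(G)`, inherited from the compact-open topology. -/
def subAutTop {G : Type*} [Group G] [TopologicalSpace G] (P : Subgroup ↥(topAut G)) :
    TopologicalSpace ↥P :=
  TopologicalSpace.induced (Subtype.val : ↥P → ↥(topAut G)) (autTop G)

/-- The product topology on the topological semidirect product `G ⋊ P`, whose underlying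
group is `SemidirectProduct G ↥P (actHom P)`, i.e. the multiplication is
`(g₁, p₁) * (g₂, p₂) = (g₁ * p₁ g₂, p₁ * p₂)`. -/
def sdpTop {G : Type*} [Group G] [TopologicalSpace G] (P : Subgroup ↥(topAut G)) :
    TopologicalSpace (G ⋊[actHom P] ↥P) :=
  TopologicalSpace.induced (fun x : G ⋊[actHom P] ↥P => (x.left, x.right))
    (@instTopologicalSpaceProd G ↥P _ (subAutTop P))

/-- A (Hausdorff) topological group `(G, τ)` is *minimal* if every Hausdorff group topology
on `G` coarser than `τ` equals `τ`. -/
def IsMinimalTopGroup (G : Type*) [Group G] (τ : TopologicalSpace G) : Prop :=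
  ∀ σ : TopologicalSpace G, τ ≤ σ → @IsTopologicalGroup G σ _ → @T2Space G σ → σ = τ

section Auxiliary

variable {G : Type*} [Group G] [TopologicalSpace G]

/-- Conjugation by `g` as a homeomorphism. -/
def conjHomeo [IsTopologicalGroup G] (g : G) : G ≃ₜ G :=
  (Homeomorph.mulLeft g).trans (Homeomorph.mulRight g⁻¹)

lemma conjHomeo_apply [IsTopologicalGroup G] (g x : G) : conjHomeo g x = g * x * g⁻¹ := rfl

/-- Conjugation by `g` as an element of `topAut G`. -/
def conjAut [IsTopologicalGroup G] (g : G) : ↥(topAut G) :=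
  ⟨conjHomeo g, fun a b => by simp only [conjHomeo_apply]; group⟩

/-- The underlying continuous map of an element of `topAut G`. -/
def toCM (f : ↥(topAut G)) : C(G, G) := (f.1 : C(G, G))

lemma toCM_apply (f : ↥(topAut G)) (g : G) : toCM f g = f.1 g := rfl

lemma actHom_apply (P : Subgroup ↥(topAut G)) (p : ↥P) (g : G) :
    actHom P p g = p.1.1 g := rfl

end Auxiliary

/-- If `G` is a compact Hausdorff topological group, then the topological
semidirect product `G ⋊ P` is a minimal topological group for every closed subgroup `P` of
`Aut(G)`. -/
theorem semidirectProduct_minimal_of_isClosed (G : Type*)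
    [Group G] [TopologicalSpace G] [IsTopologicalGroup G] [CompactSpace G] [T2Space G]
    (P : Subgroup ↥(topAut G))
    (hPclosed : IsClosed[autTop G] (P : Set ↥(topAut G))) :
    IsMinimalTopGroup (G ⋊[actHom P] ↥P) (sdpTop P) := by
  classical
  intro σ hle hTG hT2
  letI tX : TopologicalSpace (G ⋊[actHom P] ↥P) := σ
  haveI : IsTopologicalGroup (G ⋊[actHom P] ↥P) := hTG
  haveI : T2Space (G ⋊[actHom P] ↥P) := hT2
  letI tA : TopologicalSpace ↥(topAut G) := autTop G
  letI tP : TopologicalSpace ↥P := subAutTop P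
  -- inclusion of `G` is continuous into the product topology, hence into `σ`
  have hinlτ : @Continuous G (G ⋊[actHom P] ↥P) _ (sdpTop P)
      (fun g : G => (SemidirectProduct.inl g : G ⋊[actHom P] ↥P)) :=
    continuous_induced_rng.2 (continuous_id.prodMk continuous_const)
  have hinl : Continuous (fun g : G => (SemidirectProduct.inl g : G ⋊[actHom P] ↥P)) :=
    continuous_le_rng hle hinlτ
  have hinrτ : @Continuous ↥P (G ⋊[actHom P] ↥P) tP (sdpTop P)
      (fun p : ↥P => (SemidirectProduct.inr p : G ⋊[actHom P] ↥P)) :=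
    continuous_induced_rng.2 (continuous_const.prodMk continuous_id)
  have hinr : Continuous (fun p : ↥P => (SemidirectProduct.inr p : G ⋊[actHom P] ↥P)) :=
    continuous_le_rng hle hinrτ
  -- `G` is (closedly) embedded in `(X, σ)`
  have hemb : Topology.IsClosedEmbedding
      (fun g : G => (SemidirectProduct.inl g : G ⋊[actHom P] ↥P)) :=
    hinl.isClosedEmbedding SemidirectProduct.inl_injective
  -- the conjugation action of `(X, σ)` on `G` is continuous
  have hc : Continuous fun q : (G ⋊[actHom P] ↥P) × G =>
      q.1.left * actHom P q.1.right q.2 * q.1.left⁻¹ := by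
    rw [hemb.isEmbedding.continuous_iff]
    have heq : ((fun g : G => (SemidirectProduct.inl g : G ⋊[actHom P] ↥P)) ∘
        fun q : (G ⋊[actHom P] ↥P) × G =>
          q.1.left * actHom P q.1.right q.2 * q.1.left⁻¹)
        = fun q : (G ⋊[actHom P] ↥P) × G =>
          q.1 * SemidirectProduct.inl q.2 * q.1⁻¹ := by
      funext q
      ext
      · simp [mul_assoc]
      · simp
    rw [heq]
    exact (continuous_fst.mul (hinl.comp continuous_snd)).mul continuous_fst.inv
  let F : C((G ⋊[actHom P] ↥P) × G, G) := ⟨_, hc⟩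
  have hΦ : Continuous fun x : G ⋊[actHom P] ↥P => F.curry x := F.curry.continuous
  let Cj : C(G × G, G) := ⟨fun q : G × G => q.1 * q.2 * q.1⁻¹, by fun_prop⟩
  have hconjC : Continuous fun g : G => Cj.curry g := Cj.curry.continuous
  -- the inclusion `topAut G → C(G, G)` is inducing
  have hindA : Topology.IsInducing (toCM : ↥(topAut G) → C(G, G)) := by
    constructor
    show autTop G = _
    unfold autTop coTop toCM
    rw [induced_compose]
    rfl
  have hindP : Topology.IsInducing (Subtype.val : ↥P → ↥(topAut G)) := ⟨rfl⟩
  -- the projection to `P` is `σ`-continuous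
  have hright : Continuous fun x : G ⋊[actHom P] ↥P => x.right := by
    rw [continuous_iff_ultrafilter]
    intro x₀ U hU
    obtain ⟨a, -, haU⟩ := isCompact_univ.ultrafilter_le_nhds
      (U.map fun x : G ⋊[actHom P] ↥P => x.left)
      (by simp)
    have ha : Filter.Tendsto (fun x : G ⋊[actHom P] ↥P => x.left) ↑U (𝓝 a) := by
      rwa [Ultrafilter.coe_map] at haU
    have h1 : Filter.Tendsto (fun x : G ⋊[actHom P] ↥P => Cj.curry (x.left⁻¹)) ↑U
        (𝓝 (Cj.curry a⁻¹)) :=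
      (hconjC.tendsto a⁻¹).comp (((continuous_inv (G := G)).tendsto a).comp ha)
    have h2 : Filter.Tendsto (fun x : G ⋊[actHom P] ↥P => F.curry x) ↑U (𝓝 (F.curry x₀)) :=
      (hΦ.tendsto x₀).comp hU
    set qA : ↥(topAut G) := conjAut a⁻¹ * (conjAut x₀.left * (x₀.right : ↥(topAut G))) with hqA
    have hq : (Cj.curry a⁻¹).comp (F.curry x₀) = toCM qA := by
      ext g; rfl
    have h3 : Filter.Tendsto (fun x : G ⋊[actHom P] ↥P => toCM (x.right : ↥(topAut G))) ↑U
        (𝓝 (toCM qA)) := by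
      rw [← hq]
      refine (Filter.Tendsto.compCM h1 h2).congr fun x => ?_
      ext g
      simp only [ContinuousMap.comp_apply, ContinuousMap.curry_apply, ContinuousMap.coe_mk,
        toCM_apply, F, Cj]
      show x.left⁻¹ * (x.left * actHom P x.right g * x.left⁻¹) * x.left⁻¹⁻¹ = _
      rw [actHom_apply]
      group
    have h4 : Filter.Tendsto (fun x : G ⋊[actHom P] ↥P => (x.right : ↥(topAut G))) ↑U (𝓝 qA) :=
      hindA.tendsto_nhds_iff.2 h3
    have hqP : qA ∈ P :=
      hPclosed.mem_of_tendsto h4 (Filter.Eventually.of_forall fun x => x.right.2)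
    have h5 : Filter.Tendsto (fun x : G ⋊[actHom P] ↥P => x.right) ↑U
        (𝓝 (⟨qA, hqP⟩ : ↥P)) :=
      hindP.tendsto_nhds_iff.2 h4
    have h6 : Filter.Tendsto
        (fun x : G ⋊[actHom P] ↥P => (SemidirectProduct.inr x.right : G ⋊[actHom P] ↥P)) ↑U
        (𝓝 (SemidirectProduct.inr (⟨qA, hqP⟩ : ↥P))) :=
      (hinr.tendsto _).comp h5
    have h7 : Filter.Tendsto
        (fun x : G ⋊[actHom P] ↥P => (SemidirectProduct.inr x.right : G ⋊[actHom P] ↥P)) ↑U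
        (𝓝 ((SemidirectProduct.inl a)⁻¹ * x₀)) := by
      have h7' : Filter.Tendsto
          (fun x : G ⋊[actHom P] ↥P => (SemidirectProduct.inl x.left : G ⋊[actHom P] ↥P)⁻¹ * x)
          ↑U (𝓝 ((SemidirectProduct.inl a)⁻¹ * x₀)) :=
        Filter.Tendsto.mul (Filter.Tendsto.inv ((hinl.tendsto a).comp ha)) (Filter.tendsto_id'.2 hU)
      refine h7'.congr fun x => ?_
      ext
      · simp
      · simp
    have h8 : (⟨qA, hqP⟩ : ↥P) = x₀.right := by
      have h9 := congrArg SemidirectProduct.right (tendsto_nhds_unique h6 h7)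
      simpa using h9
    rw [h8] at h5
    exact h5
  -- the projection to `G` is `σ`-continuous
  have hleft : Continuous fun x : G ⋊[actHom P] ↥P => x.left := by
    rw [hemb.isEmbedding.continuous_iff]
    have heq : ((fun g : G => (SemidirectProduct.inl g : G ⋊[actHom P] ↥P)) ∘
        fun x : G ⋊[actHom P] ↥P => x.left)
        = fun x : G ⋊[actHom P] ↥P => x * (SemidirectProduct.inr x.right)⁻¹ := by
      funext x
      ext
      · simp
      · simp
    rw [heq]
    exact continuous_id.mul ((hinr.comp hright).inv)
  refine le_antisymm ?_ hle
  exact continuous_id_iff_le.1 (continuous_induced_rng.2 (hleft.prodMk hright))
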